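/- Let h(x,y) = exp((f(x) + g(y) - c(x,y))/γ) where (f,g) are Sinkhorn potentials satisfying ∫ h(x,y) dβ(y) = 1 for all relevant x. If ‖∇₁c(x,y)‖ ≤ G_c and ∇₁c is L_c-Lipschitz in x, then ∇f exists and is Lipschitz with constant L_f = 4G_c²/γ + L_c: ‖∇f(x) - ∇f(x')‖ ≤ (4G_c²/γ + L_c)‖x - x'‖. -/

import Mathlib

open MeasureTheory Real

lemma exp_abs_sub_le (a b : ℝ) :
    |Real.exp a - Real.exp b| ≤ |a - b| * (Real.exp a + Real.exp b) := by
  wlog hab : b ≤ a generalizing a b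
  · have := this b a (le_of_not_ge hab)
    rw [abs_sub_comm b a, add_comm] at this
    rwa [abs_sub_comm]
  have h1 := Real.add_one_le_exp (b - a)
  have h2 : Real.exp b = Real.exp a * Real.exp (b - a) := by
    rw [← Real.exp_add]; ring_nf
  have hpa := Real.exp_pos a
  have hpb := Real.exp_pos b
  rw [abs_of_nonneg (by nlinarith [Real.exp_le_exp.2 hab] : (0:ℝ) ≤ Real.exp a - Real.exp b),
    abs_of_nonneg (by linarith : (0:ℝ) ≤ a - b)]
  nlinarith

set_option maxHeartbeats 2000000 in
theorem sinkhorn_potential_gradient_lipschitz {d : ℕ}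
    (γ Gc Lc : ℝ) (hγ : 0 < γ) (hGc : 0 ≤ Gc)
    (β : Measure (EuclideanSpace ℝ (Fin d))) [IsProbabilityMeasure β]
    (c : EuclideanSpace ℝ (Fin d) → EuclideanSpace ℝ (Fin d) → ℝ)
    (Dc : EuclideanSpace ℝ (Fin d) → EuclideanSpace ℝ (Fin d) → EuclideanSpace ℝ (Fin d))
    (f g : EuclideanSpace ℝ (Fin d) → ℝ)
    (gradf : EuclideanSpace ℝ (Fin d) → EuclideanSpace ℝ (Fin d))
    (h : EuclideanSpace ℝ (Fin d) → EuclideanSpace ℝ (Fin d) → ℝ)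
    (hdef : ∀ x y, h x y = Real.exp ((f x + g y - c x y) / γ))
    (hopt : ∀ x, ∫ y, h x y ∂β = 1)
    (hDc : ∀ x y, HasGradientAt (fun z => c z y) (Dc x y) x)
    (hDc_bound : ∀ x y, ‖Dc x y‖ ≤ Gc)
    (hDc_lip : ∀ x x' y, ‖Dc x y - Dc x' y‖ ≤ Lc * ‖x - x'‖)
    (hgradf : ∀ x, gradf x = ∫ y, h x y • Dc x y ∂β) :
    (∀ x, HasGradientAt f (gradf x) x) ∧
    (∀ x x', ‖gradf x - gradf x'‖ ≤ (4 * Gc ^ 2 / γ + Lc) * ‖x - x'‖) := by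
  have hγ' : γ ≠ 0 := ne_of_gt hγ
  have hpos : ∀ x y, 0 < h x y := fun x y => by rw [hdef]; exact Real.exp_pos _
  -- integrability of h x ·
  have hInt_h : ∀ x, Integrable (fun y => h x y) β := by
    intro x
    by_contra hc
    have h0 := MeasureTheory.integral_undef hc
    rw [hopt x] at h0
    norm_num at h0
  -- the function φ
  obtain ⟨φ, hφdef⟩ : ∃ φ : EuclideanSpace ℝ (Fin d) → EuclideanSpace ℝ (Fin d) → ℝ,
      ∀ x y, φ x y = Real.exp ((g y - c x y) / γ) :=
    ⟨fun x y => Real.exp ((g y - c x y) / γ), fun x y => rfl⟩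
  have hφpos : ∀ x y, 0 < φ x y := fun x y => by rw [hφdef]; exact Real.exp_pos _
  have hφ2 : ∀ x y, φ x y = Real.exp (-(f x) / γ) * h x y := by
    intro x y
    rw [hdef, hφdef, ← Real.exp_add]
    congr 1
    ring
  have hφh : ∀ x y, h x y = Real.exp ((f x) / γ) * φ x y := by
    intro x y
    rw [hφ2, ← mul_assoc, ← Real.exp_add]
    have : f x / γ + -(f x) / γ = 0 := by ring
    rw [this, Real.exp_zero, one_mul]
  have hInt_φ : ∀ x, Integrable (fun y => φ x y) β := by
    intro x
    simp only [hφ2]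
    exact (hInt_h x).const_mul _
  have hintφ : ∀ x, ∫ y, φ x y ∂β = Real.exp (-(f x) / γ) := by
    intro x
    simp only [hφ2]
    rw [integral_const_mul, hopt x, mul_one]
  -- Lipschitz continuity of c in the first variable
  have hc_lip : ∀ x x' y, |c x y - c x' y| ≤ Gc * ‖x - x'‖ := by
    intro x x' y
    have := Convex.norm_image_sub_le_of_norm_hasFDerivWithin_le
      (f := fun z => c z y)
      (f' := fun z => InnerProductSpace.toDual ℝ (EuclideanSpace ℝ (Fin d)) (Dc z y))
      (fun z _ => ((hDc z y).hasFDerivAt).hasFDerivWithinAt)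
      (fun z _ => by rw [LinearIsometryEquiv.norm_map]; exact hDc_bound z y)
      convex_univ (Set.mem_univ x') (Set.mem_univ x)
    simpa [Real.norm_eq_abs] using this
  -- measurability of y ↦ c x y - g y
  have hcg : ∀ x, AEMeasurable (fun y => c x y - g y) β := by
    intro x
    have hm : AEMeasurable (fun y => h x y) β := (hInt_h x).aemeasurable
    have hlog : AEMeasurable (fun y => Real.log (h x y)) β :=
      Real.measurable_log.comp_aemeasurable hm
    have heq : (fun y => c x y - g y) = fun y => f x - γ * Real.log (h x y) := by
      funext y
      rw [hdef, Real.log_exp]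
      field_simp
      ring
    rw [heq]
    exact (hlog.const_mul γ).const_sub (f x)
  -- measurability of y ↦ Dc x y
  have hDc_meas : ∀ x, AEStronglyMeasurable (fun y => Dc x y) β := by
    intro x
    have hcoord : ∀ i : Fin d, AEMeasurable (fun y => Dc x y i) β := by
      intro i
      set v : EuclideanSpace ℝ (Fin d) := EuclideanSpace.single i (1:ℝ) with hv
      set u : ℕ → ℝ := fun n => 1 / (n + 1) with hu
      have hu0 : ∀ n, u n ≠ 0 := fun n => by positivity
      have hut : Filter.Tendsto u Filter.atTop (nhdsWithin (0:ℝ) {(0:ℝ)}ᶜ) := by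
        refine tendsto_nhdsWithin_of_tendsto_nhds_of_eventually_within _
          tendsto_one_div_add_atTop_nhds_zero_nat ?_
        exact Filter.Eventually.of_forall fun n => hu0 n
      have key : ∀ y, Filter.Tendsto
          (fun n => (c (x + u n • v) y - c (x + (0:ℝ) • v) y) / (u n - 0))
          Filter.atTop (nhds (Dc x y i)) := by
        intro y
        have hline : HasDerivAt (fun t : ℝ => x + t • v) v 0 := by
          simpa using ((hasDerivAt_id (0:ℝ)).smul_const v).const_add x
        have hfd : HasFDerivAt (fun z => c z y)
            (InnerProductSpace.toDual ℝ (EuclideanSpace ℝ (Fin d)) (Dc x y))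
            (x + (0:ℝ) • v) := by
          simp only [zero_smul, add_zero]
          exact (hDc x y).hasFDerivAt
        have hcomp : HasDerivAt (fun t : ℝ => c (x + t • v) y)
            ((InnerProductSpace.toDual ℝ (EuclideanSpace ℝ (Fin d)) (Dc x y)) v) 0 :=
          by have := hfd.comp_hasDerivAt 0 hline; exact this
        have hval : (InnerProductSpace.toDual ℝ (EuclideanSpace ℝ (Fin d)) (Dc x y)) v
            = Dc x y i := by
          rw [InnerProductSpace.toDual_apply_apply, hv]
          simpa using EuclideanSpace.inner_single_right (𝕜 := ℝ) i 1 (Dc x y)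
        rw [hval] at hcomp
        have ht := (hasDerivAt_iff_tendsto_slope.1 hcomp).comp hut
        refine ht.congr fun n => ?_
        simp [Function.comp, slope_def_field]
      have hseq : ∀ n : ℕ, AEMeasurable
          (fun y => (c (x + u n • v) y - c (x + (0:ℝ) • v) y) / (u n - 0)) β := by
        intro n
        have heq : (fun y => (c (x + u n • v) y - c (x + (0:ℝ) • v) y) / (u n - 0))
            = fun y => ((c (x + u n • v) y - g y) - (c (x + (0:ℝ) • v) y - g y)) / (u n - 0) := by
          funext y; ring_nf
        rw [heq]
        exact ((hcg _).sub (hcg _)).div_const _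
      exact aemeasurable_of_tendsto_metrizable_ae' hseq (Filter.Eventually.of_forall key)
    have hrepr : (fun y => Dc x y)
        = fun y => ∑ i : Fin d, (Dc x y i) • (EuclideanSpace.single i (1:ℝ)) := by
      funext y
      symm
      simpa [EuclideanSpace.basisFun_apply, EuclideanSpace.basisFun_repr]
        using (EuclideanSpace.basisFun (Fin d) ℝ).sum_repr (Dc x y)
    rw [hrepr]
    exact (Finset.aemeasurable_fun_sum _ fun i _ =>
      (hcoord i).smul_const _).aestronglyMeasurable
  -- integrability of the vector integrands
  have hInt_hDc : ∀ x, Integrable (fun y => h x y • Dc x y) β := by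
    intro x
    refine Integrable.mono' ((hInt_h x).const_mul Gc)
      (((hInt_h x).aestronglyMeasurable).smul (hDc_meas x))
      (Filter.Eventually.of_forall fun y => ?_)
    rw [norm_smul, Real.norm_eq_abs, abs_of_pos (hpos x y)]
    rw [mul_comm Gc (h x y)]
    exact mul_le_mul_of_nonneg_left (hDc_bound x y) (le_of_lt (hpos x y))
  have hInt_φDc : ∀ x, Integrable (fun y => φ x y • Dc x y) β := by
    intro x
    refine Integrable.mono' ((hInt_φ x).const_mul Gc)
      (((hInt_φ x).aestronglyMeasurable).smul (hDc_meas x))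
      (Filter.Eventually.of_forall fun y => ?_)
    rw [norm_smul, Real.norm_eq_abs, abs_of_pos (hφpos x y)]
    rw [mul_comm Gc (φ x y)]
    exact mul_le_mul_of_nonneg_left (hDc_bound x y) (le_of_lt (hφpos x y))
  -- the gradient formula
  have hgrad : ∀ x, HasGradientAt f (gradf x) x := by
    intro x₀
    have hF'p : ∀ x y, HasFDerivAt (fun z => φ z y)
        ((-(γ⁻¹ * φ x y)) • InnerProductSpace.toDual ℝ (EuclideanSpace ℝ (Fin d)) (Dc x y)) x := by
      intro x y
      have h1 : HasFDerivAt (fun z => γ⁻¹ * (g y - c z y))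
          ((γ⁻¹ : ℝ) • (-(InnerProductSpace.toDual ℝ (EuclideanSpace ℝ (Fin d)) (Dc x y)))) x := by
        have := ((hDc x y).hasFDerivAt.const_sub (g y)).const_mul (γ⁻¹ : ℝ)
        simpa using this
      have h1' : HasFDerivAt (fun z => (g y - c z y) / γ)
          ((γ⁻¹ : ℝ) • (-(InnerProductSpace.toDual ℝ (EuclideanSpace ℝ (Fin d)) (Dc x y)))) x := by
        simpa [div_eq_inv_mul] using h1
      have h2 := (Real.hasDerivAt_exp ((g y - c x y) / γ)).comp_hasFDerivAt x h1'
      have h3 : HasFDerivAt (fun z => φ z y)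
          (Real.exp ((g y - c x y) / γ) •
            ((γ⁻¹ : ℝ) • (-(InnerProductSpace.toDual ℝ (EuclideanSpace ℝ (Fin d)) (Dc x y))))) x := by
        refine HasFDerivAt.congr_of_eventuallyEq h2 ?_
        exact Filter.Eventually.of_forall fun z => by
          simp only [Function.comp]
          exact (hφdef z y)
      rw [← hφdef x y] at h3
      convert h3 using 1
      module
    have hφ_ratio : ∀ y, ∀ x ∈ Metric.ball x₀ 1, φ x y ≤ Real.exp (Gc / γ) * φ x₀ y := by
      intro y x hx
      have hxd : ‖x - x₀‖ ≤ 1 := le_of_lt (by simpa [dist_eq_norm] using hx)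
      have h1 : φ x y = φ x₀ y * Real.exp ((c x₀ y - c x y) / γ) := by
        rw [hφdef, hφdef, ← Real.exp_add]
        congr 1
        ring
      rw [h1, mul_comm]
      refine mul_le_mul_of_nonneg_right ?_ (le_of_lt (hφpos x₀ y))
      refine Real.exp_le_exp.2 ?_
      have h2 : c x₀ y - c x y ≤ Gc := by
        have h3 := hc_lip x₀ x y
        have hn : ‖x₀ - x‖ ≤ 1 := by rwa [norm_sub_rev]
        nlinarith [le_abs_self (c x₀ y - c x y), abs_nonneg (c x₀ y - c x y)]
      gcongr
    -- measurability of the derivative integrand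
    have hF'meas : AEStronglyMeasurable (fun y =>
        (-(γ⁻¹ * φ x₀ y)) • InnerProductSpace.toDual ℝ (EuclideanSpace ℝ (Fin d)) (Dc x₀ y)) β := by
      refine AEStronglyMeasurable.smul (f := fun y => -(γ⁻¹ * φ x₀ y))
        (g := fun y => InnerProductSpace.toDual ℝ (EuclideanSpace ℝ (Fin d)) (Dc x₀ y)) ?_ ?_
      · exact ((hInt_φ x₀).aestronglyMeasurable.const_mul _).neg
      · exact (InnerProductSpace.toDual ℝ
          (EuclideanSpace ℝ (Fin d))).continuous.comp_aestronglyMeasurable (hDc_meas x₀)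
    -- the bound
    have hbound : ∀ y, ∀ x ∈ Metric.ball x₀ 1,
        ‖(-(γ⁻¹ * φ x y)) • InnerProductSpace.toDual ℝ (EuclideanSpace ℝ (Fin d)) (Dc x y)‖
          ≤ (γ⁻¹ * Gc * Real.exp (Gc / γ)) * φ x₀ y := by
      intro y x hx
      have hgp : (0:ℝ) < γ⁻¹ * φ x y := mul_pos (inv_pos.2 hγ) (hφpos x y)
      rw [norm_smul, Real.norm_eq_abs, abs_neg, abs_of_pos hgp,
        LinearIsometryEquiv.norm_map]
      have h1 : γ⁻¹ * φ x y * ‖Dc x y‖ ≤ γ⁻¹ * φ x y * Gc :=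
        mul_le_mul_of_nonneg_left (hDc_bound x y) (le_of_lt hgp)
      refine h1.trans ?_
      have h2 := hφ_ratio y x hx
      have hγi : (0:ℝ) < γ⁻¹ := by positivity
      have h3 := mul_le_mul_of_nonneg_left h2 (mul_nonneg (le_of_lt hγi) hGc)
      calc γ⁻¹ * φ x y * Gc = (γ⁻¹ * Gc) * φ x y := by ring
        _ ≤ (γ⁻¹ * Gc) * (Real.exp (Gc / γ) * φ x₀ y) := h3
        _ = (γ⁻¹ * Gc * Real.exp (Gc / γ)) * φ x₀ y := by ring
    have hmain := hasFDerivAt_integral_of_dominated_of_fderiv_le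
      (F := fun x y => φ x y)
      (F' := fun x y =>
        (-(γ⁻¹ * φ x y)) • InnerProductSpace.toDual ℝ (EuclideanSpace ℝ (Fin d)) (Dc x y))
      (x₀ := x₀) (bound := fun y => (γ⁻¹ * Gc * Real.exp (Gc / γ)) * φ x₀ y)
      (s := Metric.ball x₀ 1) (Metric.ball_mem_nhds x₀ one_pos)
      (Filter.Eventually.of_forall fun x => (hInt_φ x).aestronglyMeasurable)
      (hInt_φ x₀) hF'meas
      (Filter.Eventually.of_forall fun y => hbound y)
      ((hInt_φ x₀).const_mul _)
      (Filter.Eventually.of_forall fun y x _ => hF'p x y)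
    -- rewrite the derivative
    have hrw : (∫ y, (-(γ⁻¹ * φ x₀ y)) •
          InnerProductSpace.toDual ℝ (EuclideanSpace ℝ (Fin d)) (Dc x₀ y) ∂β)
        = InnerProductSpace.toDual ℝ (EuclideanSpace ℝ (Fin d))
            ((-(γ⁻¹ : ℝ)) • ∫ y, φ x₀ y • Dc x₀ y ∂β) := by
      have e1 : ∀ y, (-(γ⁻¹ * φ x₀ y)) •
            InnerProductSpace.toDual ℝ (EuclideanSpace ℝ (Fin d)) (Dc x₀ y)
          = (InnerProductSpace.toDual ℝ (EuclideanSpace ℝ (Fin d))).toLinearIsometry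
              ((-(γ⁻¹ : ℝ)) • (φ x₀ y • Dc x₀ y)) := by
        intro y
        simp only [LinearIsometryEquiv.coe_toLinearIsometry, _root_.map_smul]
        module
      simp only [e1]
      rw [LinearIsometry.integral_comp_comm, integral_smul]
      simp only [LinearIsometryEquiv.coe_toLinearIsometry, _root_.map_smul]
    rw [hrw] at hmain
    -- pass to f = -γ log F
    have hFpos : (0:ℝ) < ∫ y, φ x₀ y ∂β := by
      rw [hintφ x₀]; exact Real.exp_pos _
    have hlog := (Real.hasDerivAt_log (ne_of_gt hFpos)).comp_hasFDerivAt x₀ hmain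
    have hfinal := hlog.const_mul (-γ)
    have hfeq : (fun x => -γ * Real.log (∫ y, φ x y ∂β)) = f := by
      funext x
      rw [hintφ x, Real.log_exp]
      field_simp
    rw [hasGradientAt_iff_hasFDerivAt]
    have hgoal : HasFDerivAt f
        ((-γ) • (∫ y, φ x₀ y ∂β)⁻¹ •
          InnerProductSpace.toDual ℝ (EuclideanSpace ℝ (Fin d))
            ((-(γ⁻¹ : ℝ)) • ∫ y, φ x₀ y • Dc x₀ y ∂β)) x₀ := by
      rw [← hfeq]
      exact hfinal
    refine hgoal.congr_fderiv ?_
    symm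
    -- identify the gradient
    have hg1 : gradf x₀ = Real.exp (f x₀ / γ) • ∫ y, φ x₀ y • Dc x₀ y ∂β := by
      rw [hgradf x₀, ← integral_smul]
      congr 1
      funext y
      rw [hφh x₀ y, smul_smul]
    have hTsmul : ∀ (a : ℝ) (v : EuclideanSpace ℝ (Fin d)),
        a • (InnerProductSpace.toDual ℝ (EuclideanSpace ℝ (Fin d)) v)
          = InnerProductSpace.toDual ℝ (EuclideanSpace ℝ (Fin d)) (a • v) := by
      intro a v
      ext w
      simp [ContinuousLinearMap.smul_apply, InnerProductSpace.toDual_apply_apply,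
        real_inner_smul_left]
    rw [hTsmul, hTsmul]
    congr 1
    rw [hg1, hintφ x₀, smul_smul, smul_smul]
    congr 1
    rw [neg_div, Real.exp_neg, inv_inv]
    field_simp
  refine ⟨hgrad, fun x x' => ?_⟩
  -- bound on the gradient
  have hgradf_bound : ∀ z, ‖gradf z‖ ≤ Gc := by
    intro z
    rw [hgradf z]
    have h1 : ‖∫ y, h z y • Dc z y ∂β‖ ≤ ∫ y, Gc * h z y ∂β := by
      refine norm_integral_le_of_norm_le ((hInt_h z).const_mul Gc)
        (Filter.Eventually.of_forall fun y => ?_)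
      rw [norm_smul, Real.norm_eq_abs, abs_of_pos (hpos z y), mul_comm Gc (h z y)]
      exact mul_le_mul_of_nonneg_left (hDc_bound z y) (le_of_lt (hpos z y))
    rw [integral_const_mul, hopt z, mul_one] at h1
    exact h1
  -- Lipschitz continuity of f
  have hf_lip : ∀ z z', |f z - f z'| ≤ Gc * ‖z - z'‖ := by
    intro z z'
    have := Convex.norm_image_sub_le_of_norm_hasFDerivWithin_le
      (f := f)
      (f' := fun w => InnerProductSpace.toDual ℝ (EuclideanSpace ℝ (Fin d)) (gradf w))
      (fun w _ => ((hgrad w).hasFDerivAt).hasFDerivWithinAt)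
      (fun w _ => by rw [LinearIsometryEquiv.norm_map]; exact hgradf_bound w)
      convex_univ (Set.mem_univ z') (Set.mem_univ z)
    simpa [Real.norm_eq_abs] using this
  -- pointwise bound on the difference of h
  have hh_lip : ∀ y, |h x y - h x' y|
      ≤ (2 * Gc / γ * ‖x - x'‖) * (h x y + h x' y) := by
    intro y
    rw [hdef x y, hdef x' y]
    refine (exp_abs_sub_le _ _).trans ?_
    refine mul_le_mul_of_nonneg_right ?_ (by positivity)
    have e1 : (f x + g y - c x y) / γ - (f x' + g y - c x' y) / γ
        = ((f x - f x') - (c x y - c x' y)) / γ := by ring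
    rw [e1, abs_div, abs_of_pos hγ]
    have e2 : |(f x - f x') - (c x y - c x' y)| ≤ 2 * Gc * ‖x - x'‖ := by
      have h1 := abs_le.1 (hf_lip x x')
      have h2 := abs_le.1 (hc_lip x x' y)
      rw [abs_le]
      constructor <;> [linarith [h1.1, h1.2, h2.1, h2.2]; linarith [h1.1, h1.2, h2.1, h2.2]]
    have e3 : 2 * Gc / γ * ‖x - x'‖ = (2 * Gc * ‖x - x'‖) / γ := by ring
    rw [e3]
    gcongr
  -- integrability of the two pieces
  have hA_int : Integrable (fun y => h x y • (Dc x y - Dc x' y)) β := by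
    refine Integrable.mono' ((hInt_h x).const_mul (Lc * ‖x - x'‖))
      (((hInt_h x).aestronglyMeasurable).smul ((hDc_meas x).sub (hDc_meas x')))
      (Filter.Eventually.of_forall fun y => ?_)
    rw [norm_smul, Real.norm_eq_abs, abs_of_pos (hpos x y), mul_comm (Lc * ‖x - x'‖) (h x y)]
    exact mul_le_mul_of_nonneg_left (hDc_lip x x' y) (le_of_lt (hpos x y))
  have hB_int : Integrable (fun y => (h x y - h x' y) • Dc x' y) β := by
    refine Integrable.mono' ((((hInt_h x).sub (hInt_h x')).abs).const_mul Gc)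
      ((((hInt_h x).sub (hInt_h x')).aestronglyMeasurable).smul (hDc_meas x'))
      (Filter.Eventually.of_forall fun y => ?_)
    rw [norm_smul, Real.norm_eq_abs, mul_comm Gc]
    exact mul_le_mul_of_nonneg_left (hDc_bound x' y) (abs_nonneg _)
  have hsplit : gradf x - gradf x'
      = (∫ y, h x y • (Dc x y - Dc x' y) ∂β) + ∫ y, (h x y - h x' y) • Dc x' y ∂β := by
    rw [hgradf x, hgradf x', ← integral_sub (hInt_hDc x) (hInt_hDc x'),
      ← integral_add hA_int hB_int]
    congr 1
    funext y
    rw [smul_sub, sub_smul]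
    abel
  have hA_norm : ‖∫ y, h x y • (Dc x y - Dc x' y) ∂β‖ ≤ Lc * ‖x - x'‖ := by
    have h1 : ‖∫ y, h x y • (Dc x y - Dc x' y) ∂β‖
        ≤ ∫ y, (Lc * ‖x - x'‖) * h x y ∂β := by
      refine norm_integral_le_of_norm_le ((hInt_h x).const_mul _)
        (Filter.Eventually.of_forall fun y => ?_)
      rw [norm_smul, Real.norm_eq_abs, abs_of_pos (hpos x y), mul_comm _ (h x y)]
      exact mul_le_mul_of_nonneg_left (hDc_lip x x' y) (le_of_lt (hpos x y))
    rwa [integral_const_mul, hopt x, mul_one] at h1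
  have hB_norm : ‖∫ y, (h x y - h x' y) • Dc x' y ∂β‖
      ≤ (2 * Gc ^ 2 / γ * ‖x - x'‖) * 2 := by
    have h1 : ‖∫ y, (h x y - h x' y) • Dc x' y ∂β‖
        ≤ ∫ y, (2 * Gc ^ 2 / γ * ‖x - x'‖) * (h x y + h x' y) ∂β := by
      refine norm_integral_le_of_norm_le
        (((hInt_h x).add (hInt_h x')).const_mul _)
        (Filter.Eventually.of_forall fun y => ?_)
      rw [norm_smul, Real.norm_eq_abs]
      calc |h x y - h x' y| * ‖Dc x' y‖
          ≤ ((2 * Gc / γ * ‖x - x'‖) * (h x y + h x' y)) * Gc := by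
            refine mul_le_mul (hh_lip y) (hDc_bound x' y) (norm_nonneg _) ?_
            exact mul_nonneg (mul_nonneg (div_nonneg (by positivity) hγ.le)
              (norm_nonneg _)) (add_pos (hpos x y) (hpos x' y)).le
        _ = (2 * Gc ^ 2 / γ * ‖x - x'‖) * (h x y + h x' y) := by ring
    rw [integral_const_mul, integral_add (hInt_h x) (hInt_h x'), hopt x, hopt x'] at h1
    linarith [h1]
  rw [hsplit]
  calc ‖(∫ y, h x y • (Dc x y - Dc x' y) ∂β) + ∫ y, (h x y - h x' y) • Dc x' y ∂β‖
      ≤ ‖∫ y, h x y • (Dc x y - Dc x' y) ∂β‖ + ‖∫ y, (h x y - h x' y) • Dc x' y ∂β‖ :=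
        norm_add_le _ _
    _ ≤ Lc * ‖x - x'‖ + (2 * Gc ^ 2 / γ * ‖x - x'‖) * 2 := add_le_add hA_norm hB_norm
    _ = (4 * Gc ^ 2 / γ + Lc) * ‖x - x'‖ := by ring
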